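/- If G is a K×N matrix and F is an (N−K)×N matrix over a field such that the vertically stacked N×N matrix (G; F) is invertible, and G⊥ is an (N−K)×N matrix of rank N−K whose rows are orthogonal to the rows of G (i.e. G⊥ · Gᵀ = 0), then the (N−K)×(N−K) matrix G⊥ · Fᵀ is invertible. -/

import Mathlib

/-- If the vertically stacked `N × N` matrix `(G; F)` is invertible, and `G⊥` is an
`(N-K) × N` matrix of rank `N-K` whose rows are orthogonal to the rows of `G`
(`G⊥ * Gᵀ = 0`), then the `(N-K) × (N-K)` matrix `G⊥ * Fᵀ` is invertible. -/
theorem gperp_mul_f_transpose_isUnit {F : Type*} [Field F] {N K : ℕ} (hK : K ≤ N)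
    (G : Matrix (Fin K) (Fin N) F) (Fm : Matrix (Fin (N - K)) (Fin N) F)
    (Gperp : Matrix (Fin (N - K)) (Fin N) F)
    (hstack : IsUnit ((Matrix.fromRows G Fm).submatrix
      (fun i : Fin N => finSumFinEquiv.symm (Fin.cast (by omega) i)) id))
    (hrank : Gperp.rank = N - K)
    (horth : Gperp * G.transpose = 0) :
    IsUnit (Gperp * Fm.transpose) := by
  set M := (Matrix.fromRows G Fm).submatrix
      (fun i : Fin N => finSumFinEquiv.symm (Fin.cast (by omega) i)) id with hM
  -- rows of Gperp are linearly independent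
  have hli : LinearIndependent F (fun i => Gperp i) := by
    rw [linearIndependent_iff_card_eq_finrank_span, Set.finrank]
    change _ = Module.finrank F (Submodule.span F (Set.range Gperp.row))
    rw [← Matrix.rank_eq_finrank_span_row, hrank, Fintype.card_fin]
  have hGinj : Function.Injective Gperp.vecMul := Matrix.vecMul_injective_iff.2 hli
  rw [← Matrix.vecMul_injective_iff_isUnit]
  intro x y hxy
  have hsub : Matrix.vecMul (x - y) (Gperp * Fm.transpose) = 0 := by
    rw [Matrix.sub_vecMul]
    exact sub_eq_zero_of_eq hxy
  set v := x - y with hv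
  set w := Matrix.vecMul v Gperp with hw
  have hwF : Matrix.mulVec Fm w = 0 := by
    rw [← Matrix.vecMul_transpose, hw, Matrix.vecMul_vecMul]
    exact hsub
  have hwG : Matrix.mulVec G w = 0 := by
    rw [← Matrix.vecMul_transpose, hw, Matrix.vecMul_vecMul, horth, Matrix.vecMul_zero]
  have hMw : Matrix.mulVec M w = 0 := by
    funext i
    rw [hM]
    show Matrix.mulVec ((Matrix.fromRows G Fm).submatrix _ id) w i = 0
    simp only [Matrix.mulVec, Matrix.submatrix_apply]
    rcases h : finSumFinEquiv.symm (Fin.cast (by omega : N = K + (N - K)) i) with k | k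
    · have := congrFun hwG k
      simpa [Matrix.mulVec, Matrix.fromRows_apply_inl] using this
    · have := congrFun hwF k
      simpa [Matrix.mulVec, Matrix.fromRows_apply_inr] using this
  have hw0 : w = 0 := by
    have := Matrix.mulVec_injective_iff_isUnit.2 hstack
    have h0 : Matrix.mulVec M (0 : Fin N → F) = 0 := Matrix.mulVec_zero M
    exact this (hMw.trans h0.symm)
  have hv0 : v = 0 := by
    apply hGinj
    show Matrix.vecMul v Gperp = Matrix.vecMul 0 Gperp
    rw [← hw, hw0, Matrix.zero_vecMul]
  have := sub_eq_zero.mp hv0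
  exact this
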